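/- arXiv:2309.13530 — 2 statements merged into one kernel-verified Lean document; each statement's English description precedes it below -/
import Mathlib

section
/- The map f ↦ ‖V_f‖ is a norm on L¹([0,1]). In particular (the nontrivial point), if f ∈ L¹([0,1]) and V_f ρ = 0 in L²([0,1]) for every ρ ∈ L²([0,1]), then f = 0 almost everywhere on [0,1]. -/
open MeasureTheory Filter
open scoped ENNReal

noncomputable section

/-- Lebesgue measure restricted to `[0,1]`. -/
def μ01 : Measure ℝ := volume.restrict (Set.Icc (0:ℝ) 1)

/-- `L²([0,1])` over `ℂ`. -/
abbrev L2 : Type := Lp ℂ 2 μ01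

instance : IsFiniteMeasure μ01 := by
  constructor
  rw [μ01, Measure.restrict_apply_univ, Real.volume_Icc]
  exact ENNReal.ofReal_lt_top

lemma ae_int (f : ℝ → ℂ) (hf : IntegrableOn f (Set.Icc 0 1)) (ρ : L2) :
    ∀ᵐ x ∂μ01, IntervalIntegrable (fun t => f (x - t) * (ρ : ℝ → ℂ) t) volume 0 x := by
  set F := Set.indicator (Set.Icc (0:ℝ) 1) f with hFdef
  set R := Set.indicator (Set.Icc (0:ℝ) 1) (ρ : ℝ → ℂ) with hRdef
  have hF : Integrable F volume := (integrable_indicator_iff measurableSet_Icc).2 hf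
  have hρ : Integrable (ρ : ℝ → ℂ) μ01 := (Lp.memLp ρ).integrable one_le_two
  have hR : Integrable R volume := (integrable_indicator_iff measurableSet_Icc).2 hρ
  have hconv := hR.ae_convolution_exists (L := ContinuousLinearMap.mul ℝ ℂ)
      (ν := volume) (μ := volume) hF
  have hconv' : ∀ᵐ x ∂μ01, Integrable (fun t => R t * F (x - t)) volume := by
    apply ae_restrict_of_ae
    filter_upwards [hconv] with x hx
    simpa [ConvolutionExistsAt] using hx
  have hmem : ∀ᵐ x ∂μ01, x ∈ Set.Icc (0:ℝ) 1 := ae_restrict_mem measurableSet_Icc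
  filter_upwards [hconv', hmem] with x hx hxmem
  rw [intervalIntegrable_iff_integrableOn_Ioc_of_le hxmem.1]
  refine (hx.integrableOn (s := Set.Ioc 0 x)).congr_fun ?_ measurableSet_Ioc
  intro t ht
  have h1 : t ∈ Set.Icc (0:ℝ) 1 := ⟨ht.1.le, ht.2.trans hxmem.2⟩
  have h2 : x - t ∈ Set.Icc (0:ℝ) 1 := ⟨by linarith [ht.2], by linarith [ht.1, hxmem.2]⟩
  simp only [hFdef, hRdef, Set.indicator_of_mem h1, Set.indicator_of_mem h2]
  ring

lemma primitive_zero (f : ℝ → ℂ) (hf : IntegrableOn f (Set.Icc 0 1))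
    (h : ∀ᵐ x ∂μ01, (∫ t in (0:ℝ)..x, f (x - t)) = 0) : f =ᵐ[μ01] 0 := by
  set F := Set.indicator (Set.Icc (0:ℝ) 1) f with hFdef
  have hF : Integrable F volume := (integrable_indicator_iff measurableSet_Icc).2 hf
  set P : ℝ → ℂ := fun x => ∫ t in (0:ℝ)..x, F t with hPdef
  have hPcont : Continuous P :=
    intervalIntegral.continuous_primitive (fun a b => hF.intervalIntegrable) 0
  have hmem : ∀ᵐ x ∂μ01, x ∈ Set.Icc (0:ℝ) 1 := ae_restrict_mem measurableSet_Icc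
  have h1 : ∀ᵐ x ∂μ01, P x = 0 := by
    filter_upwards [h, hmem] with x hx hxm
    have e1 : (∫ t in (0:ℝ)..x, f (x - t)) = ∫ t in (0:ℝ)..x, f t := by
      simpa using intervalIntegral.integral_comp_sub_left f x
    have e2 : P x = ∫ t in (0:ℝ)..x, f t := by
      apply intervalIntegral.integral_congr
      intro t ht
      rw [Set.uIcc_of_le hxm.1] at ht
      have htm : t ∈ Set.Icc (0:ℝ) 1 := ⟨ht.1, ht.2.trans hxm.2⟩
      exact Set.indicator_of_mem htm f
    rw [e2, ← e1, hx]
  -- P vanishes everywhere on [0,1]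
  have h2 : ∀ x ∈ Set.Icc (0:ℝ) 1, P x = 0 := by
    intro x hx
    set s : Set ℝ := {y | y ∈ Set.Icc (0:ℝ) 1 ∧ P y = 0} with hsdef
    have hxcl : x ∈ closure s := by
      rw [Metric.mem_closure_iff]
      by_contra hc
      push_neg at hc
      obtain ⟨ε, εpos, hball⟩ := hc
      set a : ℝ := max 0 (x - ε/2)
      set b : ℝ := min 1 (x + ε/2)
      have hab : a < b := by
        simp only [a, b, lt_min_iff, max_lt_iff]
        constructor
        · constructor
          · linarith
          · linarith [hx.2]
        · constructor
          · linarith [hx.1]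
          · linarith
      have hsub : Set.Ioo a b ⊆ {y | ¬ P y = 0} := by
        intro y hy
        intro hPy
        have hyIcc : y ∈ Set.Icc (0:ℝ) 1 :=
          ⟨(le_max_left 0 (x - ε/2)).trans hy.1.le, hy.2.le.trans (min_le_left 1 (x + ε/2))⟩
        have hdist : dist x y < ε := by
          rw [Real.dist_eq, abs_lt]
          have h1 := hy.1
          have h2 := hy.2
          have := le_max_right 0 (x - ε/2)
          have := min_le_right 1 (x + ε/2)
          constructor <;> [skip; skip] <;>
            simp only [a, b] at h1 h2 <;>
            [linarith [le_max_right 0 (x - ε/2)]; linarith [min_le_right 1 (x + ε/2)]]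
        exact absurd (hball y ⟨hyIcc, hPy⟩) (not_le.2 hdist)
      have hnull : μ01 {y | ¬ P y = 0} = 0 := h1
      have hpos : 0 < μ01 (Set.Ioo a b) := by
        rw [μ01, Measure.restrict_apply measurableSet_Ioo]
        have hsub' : Set.Ioo a b ⊆ Set.Icc (0:ℝ) 1 := by
          intro y hy
          exact ⟨(le_max_left 0 (x - ε/2)).trans hy.1.le,
            hy.2.le.trans (min_le_left 1 (x + ε/2))⟩
        rw [Set.inter_eq_self_of_subset_left hsub', Real.volume_Ioo]
        exact ENNReal.ofReal_pos.2 (by linarith)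
      have := measure_mono_null hsub hnull
      exact absurd this hpos.ne'
    have hcls : closure s ⊆ P ⁻¹' {0} := by
      apply closure_minimal
      · intro y hy; exact hy.2
      · exact IsClosed.preimage hPcont isClosed_singleton
    exact hcls hxcl
  -- Lebesgue differentiation
  have h3 := IsUnifLocDoublingMeasure.ae_tendsto_average (μ := volume)
      hF.locallyIntegrable 1
  have h4 : ∀ᵐ x ∂volume, x ∈ Set.Ioo (0:ℝ) 1 → F x = 0 := by
    filter_upwards [h3] with x hx hxm
    have hδ : Tendsto (fun r : ℝ => r) (nhdsWithin 0 (Set.Ioi 0)) (nhdsWithin 0 (Set.Ioi 0)) :=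
      tendsto_id
    have hxmem : ∀ᶠ r : ℝ in nhdsWithin 0 (Set.Ioi 0),
        x ∈ Metric.closedBall x (1 * r) := by
      filter_upwards [self_mem_nhdsWithin] with r hr
      exact Metric.mem_closedBall_self (by simp; linarith [Set.mem_Ioi.1 hr])
    have htend := hx (fun r : ℝ => x) (fun r => r) hδ hxmem
    have hev : ∀ᶠ r : ℝ in nhdsWithin 0 (Set.Ioi 0),
        (⨍ y in Metric.closedBall x r, F y) = 0 := by
      have hmemnhds : Set.Ioo (0:ℝ) (min x (1 - x)) ∈ nhdsWithin (0:ℝ) (Set.Ioi 0) := by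
        apply mem_nhdsWithin.2
        refine ⟨Set.Iio (min x (1 - x)), isOpen_Iio, ?_, ?_⟩
        · simp only [Set.mem_Iio, lt_min_iff]
          exact ⟨hxm.1, by linarith [hxm.2]⟩
        · intro y hy
          exact ⟨Set.mem_Ioi.1 hy.2, hy.1⟩
      filter_upwards [hmemnhds] with r hr
      have hrpos : 0 < r := hr.1
      have hrx : r < x := lt_of_lt_of_le hr.2 (min_le_left _ _)
      have hr1 : r < 1 - x := lt_of_lt_of_le hr.2 (min_le_right _ _)
      have hint : (∫ y in Metric.closedBall x r, F y) = 0 := by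
        rw [Real.closedBall_eq_Icc, MeasureTheory.integral_Icc_eq_integral_Ioc,
          ← intervalIntegral.integral_of_le (by linarith)]
        have := intervalIntegral.integral_interval_sub_left
          (f := F) (μ := volume) (a := 0) (b := x + r) (c := x - r)
          hF.intervalIntegrable hF.intervalIntegrable
        rw [← this]
        have hP1 : P (x + r) = 0 := h2 _ ⟨by linarith, by linarith⟩
        have hP2 : P (x - r) = 0 := h2 _ ⟨by linarith, by linarith⟩
        simp only [hPdef] at hP1 hP2
        rw [hP1, hP2, sub_zero]
      rw [setAverage_eq, hint, smul_zero]
    have : Tendsto (fun r : ℝ => ⨍ y in Metric.closedBall x r, F y)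
        (nhdsWithin 0 (Set.Ioi 0)) (nhds 0) := by
      exact Tendsto.congr' (Filter.EventuallyEq.symm hev) tendsto_const_nhds
    exact (tendsto_nhds_unique htend this)
  -- conclude
  have h5 : ∀ᵐ x ∂μ01, x ∈ Set.Ioo (0:ℝ) 1 := by
    rw [ae_iff]
    have : {x | ¬ x ∈ Set.Ioo (0:ℝ) 1} ∩ Set.Icc 0 1 ⊆ {0, 1} := by
      intro y hy
      rcases hy with ⟨hy1, hy2⟩
      simp only [Set.mem_Ioo, not_and_or, not_lt] at hy1
      rcases hy1 with h | h
      · left; exact le_antisymm h hy2.1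
      · right; exact le_antisymm hy2.2 h
    rw [μ01, Measure.restrict_apply]
    · refine measure_mono_null this ?_
      have : ({0, 1} : Set ℝ).Finite := (Set.finite_singleton 1).insert 0
      exact this.measure_zero volume
    · exact (measurableSet_Ioo).compl
  filter_upwards [ae_restrict_of_ae h4, h5] with x hx hxIoo
  have := hx hxIoo
  rw [hFdef] at this
  rw [Set.indicator_of_mem (Set.mem_Icc_of_Ioo hxIoo) f] at this
  exact this

/-- The map `f ↦ ‖V_f‖` is a norm on `L¹[0,1]`: it satisfies the triangle inequality
(`‖V_{f+g}‖ ≤ ‖V_f‖ + ‖V_g‖`), absolute homogeneity (`‖V_{c f}‖ = |c| ‖V_f‖`), and — the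
nontrivial point — definiteness: if `V_f ρ = 0` for every `ρ ∈ L²[0,1]`, then `f = 0`
almost everywhere on `[0,1]`. -/
theorem Vf_norm (f g : ℝ → ℂ) (c : ℂ)
    (hf : IntegrableOn f (Set.Icc 0 1)) (hg : IntegrableOn g (Set.Icc 0 1))
    (Vf Vg Vfg Vcf : L2 →L[ℂ] L2)
    (hVf : ∀ ρ : L2, ∀ᵐ x ∂μ01, (Vf ρ) x = ∫ t in (0:ℝ)..x, f (x - t) * ρ t)
    (hVg : ∀ ρ : L2, ∀ᵐ x ∂μ01, (Vg ρ) x = ∫ t in (0:ℝ)..x, g (x - t) * ρ t)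
    (hVfg : ∀ ρ : L2, ∀ᵐ x ∂μ01,
      (Vfg ρ) x = ∫ t in (0:ℝ)..x, (f (x - t) + g (x - t)) * ρ t)
    (hVcf : ∀ ρ : L2, ∀ᵐ x ∂μ01,
      (Vcf ρ) x = ∫ t in (0:ℝ)..x, (c * f (x - t)) * ρ t) :
    ‖Vfg‖ ≤ ‖Vf‖ + ‖Vg‖ ∧ ‖Vcf‖ = ‖c‖ * ‖Vf‖ ∧
    ((∀ ρ : L2, Vf ρ = 0) → f =ᵐ[μ01] 0) := by
  have hadd : Vfg = Vf + Vg := by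
    ext ρ
    filter_upwards [hVf ρ, hVg ρ, hVfg ρ, ae_int f hf ρ, ae_int g hg ρ,
      Lp.coeFn_add (Vf ρ) (Vg ρ)] with x h1 h2 h3 h4 h5 h6
    have h7 : (Vf + Vg) ρ = Vf ρ + Vg ρ := rfl
    rw [h3, h7, h6, Pi.add_apply, h1, h2]
    have : (∫ t in (0:ℝ)..x, (f (x - t) + g (x - t)) * (ρ : ℝ → ℂ) t)
        = ∫ t in (0:ℝ)..x, (f (x - t) * (ρ : ℝ → ℂ) t + g (x - t) * (ρ : ℝ → ℂ) t) := by
      congr 1; ext t; ring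
    rw [this, intervalIntegral.integral_add h4 h5]
  have hsmul : Vcf = c • Vf := by
    ext ρ
    filter_upwards [hVf ρ, hVcf ρ, Lp.coeFn_smul c (Vf ρ)] with x h1 h2 h3
    have h4 : (c • Vf) ρ = c • (Vf ρ) := rfl
    rw [h2, h4, h3, Pi.smul_apply, h1, smul_eq_mul, ← intervalIntegral.integral_const_mul]
    congr 1; ext t; ring
  refine ⟨?_, ?_, ?_⟩
  · rw [hadd]; exact norm_add_le _ _
  · rw [hsmul]; exact norm_smul c Vf
  · intro hzero
    set ρ₁ : L2 := (memLp_const (1:ℂ)).toLp _ with hρ₁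
    have hρ₁coe : (ρ₁ : ℝ → ℂ) =ᵐ[μ01] fun _ => (1:ℂ) := MemLp.coeFn_toLp _
    have hρone : ∀ᵐ t ∂volume, t ∈ Set.Icc (0:ℝ) 1 → (ρ₁ : ℝ → ℂ) t = 1 :=
      (ae_restrict_iff' measurableSet_Icc).1 hρ₁coe
    apply primitive_zero f hf
    have hmem : ∀ᵐ x ∂μ01, x ∈ Set.Icc (0:ℝ) 1 := ae_restrict_mem measurableSet_Icc
    have hcoe0 : (Vf ρ₁ : ℝ → ℂ) =ᵐ[μ01] 0 := by
      rw [hzero ρ₁]; exact Lp.coeFn_zero ℂ 2 μ01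
    filter_upwards [hVf ρ₁, hcoe0, hmem] with x h1 h2 h3
    have e : (∫ t in (0:ℝ)..x, f (x - t) * (ρ₁ : ℝ → ℂ) t)
        = ∫ t in (0:ℝ)..x, f (x - t) := by
      apply intervalIntegral.integral_congr_ae
      filter_upwards [hρone] with t ht htI
      rw [Set.uIoc_of_le h3.1] at htI
      rw [ht ⟨htI.1.le, htI.2.trans h3.2⟩, mul_one]
    rw [← e, ← h1, h2]
    rfl
end
end

section
/- The Volterra operator algebra A_V does not admit a gauge action: there is no family (γ_λ)_{λ∈𝕋}, indexed by the unit circle 𝕋 ⊂ ℂ, of surjective multiplicative linear isometries of A_V onto itself satisfying γ_λ ∘ γ_μ = γ_{λμ} for all λ, μ ∈ 𝕋, γ_λ(V) = λV for all λ ∈ 𝕋, and such that for each S ∈ A_V the map λ ↦ γ_λ(S) is continuous in the operator norm. -/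
open MeasureTheory
open scoped ENNReal

noncomputable section

/-- `A_V`: the operator-norm closure of the polynomials in `V` with zero constant term. -/
def polyAlgV (V : L2 →L[ℂ] L2) : Set (L2 →L[ℂ] L2) :=
  closure ((NonUnitalAlgebra.adjoin ℂ {V} : NonUnitalSubalgebra ℂ (L2 →L[ℂ] L2)) :
    Set (L2 →L[ℂ] L2))

/-- A gauge action on `A_V`: a family `γ_λ` (for `λ` in the unit circle) of surjective
multiplicative linear isometries of `A_V` onto itself with `γ_λ ∘ γ_μ = γ_{λμ}`,
`γ_λ V = λ V`, and norm-continuity of `λ ↦ γ_λ S` for each `S ∈ A_V`. -/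
structure GaugeAction (V : L2 →L[ℂ] L2) where
  γ : ℂ → (L2 →L[ℂ] L2) → (L2 →L[ℂ] L2)
  maps_to : ∀ l : ℂ, ‖l‖ = 1 → ∀ S ∈ polyAlgV V, γ l S ∈ polyAlgV V
  surj_on : ∀ l : ℂ, ‖l‖ = 1 → ∀ S ∈ polyAlgV V, ∃ R ∈ polyAlgV V, γ l R = S
  map_add : ∀ l : ℂ, ‖l‖ = 1 → ∀ S ∈ polyAlgV V, ∀ R ∈ polyAlgV V,
    γ l (S + R) = γ l S + γ l R
  map_smul : ∀ l : ℂ, ‖l‖ = 1 → ∀ c : ℂ, ∀ S ∈ polyAlgV V, γ l (c • S) = c • γ l S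
  map_mul : ∀ l : ℂ, ‖l‖ = 1 → ∀ S ∈ polyAlgV V, ∀ R ∈ polyAlgV V,
    γ l (S * R) = γ l S * γ l R
  isometric : ∀ l : ℂ, ‖l‖ = 1 → ∀ S ∈ polyAlgV V, ‖γ l S‖ = ‖S‖
  comp : ∀ l m : ℂ, ‖l‖ = 1 → ‖m‖ = 1 → ∀ S ∈ polyAlgV V, γ l (γ m S) = γ (l * m) S
  map_gen : ∀ l : ℂ, ‖l‖ = 1 → γ l V = l • V
  cont : ∀ S ∈ polyAlgV V, ContinuousOn (fun l => γ l S) {l : ℂ | ‖l‖ = 1}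

/-! ### Auxiliary lemmas -/

lemma μ01_def : μ01 = volume.restrict (Set.Icc (0:ℝ) 1) := rfl

instance inst_s14 : IsFiniteMeasure μ01 := by
  constructor
  rw [μ01_def, Measure.restrict_apply_univ, Real.volume_Icc]
  norm_num

lemma ae01 {P : ℝ → Prop} (h : ∀ᵐ x ∂μ01, P x) :
    ∀ᵐ x ∂(volume : Measure ℝ), x ∈ Set.Icc (0:ℝ) 1 → P x :=
  ae_imp_of_ae_restrict h

lemma mem01 : ∀ᵐ x ∂μ01, x ∈ Set.Icc (0:ℝ) 1 := by
  rw [μ01_def]; exact ae_restrict_mem measurableSet_Icc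

/-- Congruence for interval integrals of `μ01`-a.e. equal functions. -/
lemma intervalIntegral_congr01 {f g : ℝ → ℂ} (h : f =ᵐ[μ01] g) {x : ℝ}
    (hx : x ∈ Set.Icc (0:ℝ) 1) :
    ∫ t in (0:ℝ)..x, f t = ∫ t in (0:ℝ)..x, g t := by
  apply intervalIntegral.integral_congr_ae
  filter_upwards [ae01 h] with t ht hmem
  rw [Set.uIoc_of_le hx.1] at hmem
  exact ht ⟨hmem.1.le, hmem.2.trans hx.2⟩

/-- `‖f‖² = ∫ ‖f x‖²` in `L2`. -/
lemma norm_sq_L2 (f : L2) : ‖f‖ ^ 2 = ∫ x, ‖(f : ℝ → ℂ) x‖ ^ 2 ∂μ01 := by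
  rw [← inner_self_eq_norm_sq (𝕜 := ℂ) f, L2.inner_def,
    ← integral_re (L2.integrable_inner (𝕜 := ℂ) f f)]
  refine integral_congr_ae (Filter.Eventually.of_forall fun x => ?_)
  exact inner_self_eq_norm_sq (𝕜 := ℂ) _

lemma integrable_norm_sq (f : L2) : Integrable (fun x => ‖(f : ℝ → ℂ) x‖ ^ 2) μ01 := by
  have h := (L2.integrable_inner (𝕜 := ℂ) f f).re
  exact h.congr (Filter.Eventually.of_forall fun x => inner_self_eq_norm_sq (𝕜 := ℂ) _)

/-- Fubini over the triangle `0 < s ≤ t ≤ x`. -/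
lemma fubini_triangle (ξ : ℝ → ℂ) (hξ : IntegrableOn ξ (Set.Icc (0:ℝ) 1) volume) {x : ℝ}
    (hx : x ∈ Set.Icc (0:ℝ) 1) :
    ∫ t in (0:ℝ)..x, (∫ s in (0:ℝ)..t, ξ s) = ∫ t in (0:ℝ)..x, ((x - t : ℝ) : ℂ) * ξ t := by
  obtain ⟨hx0, hx1⟩ := hx
  have hsub : Set.Ioc (0:ℝ) x ⊆ Set.Icc (0:ℝ) 1 := fun t ht => ⟨ht.1.le, ht.2.trans hx1⟩
  have hξx : IntegrableOn ξ (Set.Ioc 0 x) volume := hξ.mono_set hsub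
  rw [intervalIntegral.integral_of_le hx0, intervalIntegral.integral_of_le hx0]
  have step1 : Set.EqOn (fun t => ∫ s in (0:ℝ)..t, ξ s)
      (fun t => ∫ s in Set.Ioc (0:ℝ) x, (Set.Ioc (0:ℝ) t).indicator ξ s)
      (Set.Ioc (0:ℝ) x) := by
    intro t ht
    simp only
    rw [intervalIntegral.integral_of_le ht.1.le, setIntegral_indicator measurableSet_Ioc,
      Set.Ioc_inter_Ioc, sup_idem, inf_eq_right.mpr ht.2]
  rw [setIntegral_congr_fun measurableSet_Ioc step1]
  have hswap : ∫ t in Set.Ioc (0:ℝ) x, ∫ s in Set.Ioc (0:ℝ) x, (Set.Ioc (0:ℝ) t).indicator ξ s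
      = ∫ s in Set.Ioc (0:ℝ) x, ∫ t in Set.Ioc (0:ℝ) x, (Set.Ioc (0:ℝ) t).indicator ξ s := by
    apply integral_integral_swap
    have heq : Function.uncurry (fun t s => (Set.Ioc (0:ℝ) t).indicator ξ s)
        = Set.indicator {p : ℝ × ℝ | 0 < p.2 ∧ p.2 ≤ p.1} (fun p => ξ p.2) := by
      funext p
      simp only [Function.uncurry, Set.indicator_apply, Set.mem_Ioc, Set.mem_setOf_eq]
    rw [heq]
    apply Integrable.indicator
    · have hmeas : AEStronglyMeasurable (fun p : ℝ × ℝ => ξ p.2)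
          ((volume.restrict (Set.Ioc (0:ℝ) x)).prod (volume.restrict (Set.Ioc (0:ℝ) x))) :=
        hξx.aestronglyMeasurable.comp_quasiMeasurePreserving
          Measure.quasiMeasurePreserving_snd
      rw [integrable_prod_iff hmeas]
      refine ⟨Filter.Eventually.of_forall fun t => hξx, ?_⟩
      have hconst : (fun t : ℝ => ∫ y in Set.Ioc (0:ℝ) x, ‖ξ (t, y).2‖)
          = fun _t : ℝ => ∫ y in Set.Ioc (0:ℝ) x, ‖ξ y‖ := rfl
      rw [hconst]
      exact integrable_const _
    · exact (measurableSet_lt measurable_const measurable_snd).inter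
        (measurableSet_le measurable_snd measurable_fst)
  rw [hswap]
  apply setIntegral_congr_fun measurableSet_Ioc
  intro s hs
  simp only
  have hind : (fun t => (Set.Ioc (0:ℝ) t).indicator ξ s)
      = (Set.Ici s).indicator (fun _ => ξ s) := by
    funext t
    by_cases h : s ≤ t
    · simp [Set.indicator_apply, Set.mem_Ioc, Set.mem_Ici, hs.1, h]
    · simp [Set.indicator_apply, Set.mem_Ioc, Set.mem_Ici, h]
  rw [hind, setIntegral_indicator measurableSet_Ici]
  have hset : Set.Ioc (0:ℝ) x ∩ Set.Ici s = Set.Icc s x := by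
    ext t
    constructor
    · rintro ⟨⟨_, h2⟩, h3⟩; exact ⟨h3, h2⟩
    · rintro ⟨h3, h2⟩; exact ⟨⟨lt_of_lt_of_le hs.1 h3, h2⟩, h3⟩
  rw [hset, setIntegral_const, Real.volume_real_Icc_of_le hs.2,
    Complex.real_smul]

/-- The constant function `1` in `L2`. -/
def oneL2 : L2 := MemLp.toLp (fun _ => (1:ℂ)) (memLp_const 1)

lemma oneL2_coe : (oneL2 : ℝ → ℂ) =ᵐ[μ01] fun _ => (1:ℂ) :=
  MemLp.coeFn_toLp (memLp_const 1)

lemma norm_oneL2 : ‖oneL2‖ = 1 := by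
  have h : ‖oneL2‖ ^ 2 = 1 := by
    rw [norm_sq_L2]
    have h1 : ∫ x, ‖(oneL2 : ℝ → ℂ) x‖ ^ 2 ∂μ01 = ∫ _x, (1:ℝ) ∂μ01 := by
      refine integral_congr_ae ?_
      filter_upwards [oneL2_coe] with x hx
      rw [hx]; norm_num
    rw [h1, integral_const, smul_eq_mul, mul_one, μ01, measureReal_restrict_apply_univ,
      Real.volume_real_Icc]
    norm_num
  nlinarith [norm_nonneg oneL2]

lemma integral01_eq_Ioc (f : ℝ → ℝ) :
    ∫ x, f x ∂μ01 = ∫ x in Set.Ioc (0:ℝ) 1, f x := by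
  rw [μ01_def]
  exact integral_Icc_eq_integral_Ioc

lemma integral01_id : ∫ x, x ∂μ01 = 1/2 := by
  rw [integral01_eq_Ioc, ← intervalIntegral.integral_of_le zero_le_one, integral_id]
  norm_num

lemma integrable01_id : Integrable (fun x : ℝ => x) μ01 := by
  rw [μ01_def]
  exact continuous_id.integrableOn_Icc

lemma integral01_poly : ∫ x, (x + x ^ 2 / 2) ^ 2 ∂μ01 = 19 / 30 := by
  rw [integral01_eq_Ioc, ← intervalIntegral.integral_of_le zero_le_one]
  have hexp : ∀ x : ℝ, (x + x ^ 2 / 2) ^ 2 = x ^ 2 + x ^ 3 + (1/4) * x ^ 4 := fun x => by ring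
  simp_rw [hexp]
  rw [intervalIntegral.integral_add (g := fun x : ℝ => 1/4 * x ^ 4)
      (((continuous_pow 2).intervalIntegrable 0 1).add
      ((continuous_pow 3).intervalIntegrable 0 1))
      ((continuous_const.mul (continuous_pow 4)).intervalIntegrable 0 1),
    intervalIntegral.integral_add ((continuous_pow 2).intervalIntegrable 0 1)
      ((continuous_pow 3).intervalIntegrable 0 1),
    intervalIntegral.integral_const_mul, integral_pow, integral_pow, integral_pow]
  norm_num

/-- Cauchy–Schwarz: `∫_{(0,x]} ‖f‖ ≤ √(∫_{(0,x]} ‖f‖²) · √x`. -/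
lemma cs_bound (f : ℝ → ℂ) {x : ℝ} (hx0 : 0 ≤ x)
    (h2 : MemLp f 2 (volume.restrict (Set.Ioc (0:ℝ) x))) :
    ∫ t in Set.Ioc (0:ℝ) x, ‖f t‖ ≤
      Real.sqrt (∫ t in Set.Ioc (0:ℝ) x, ‖f t‖ ^ 2) * Real.sqrt x := by
  have hfin : IsFiniteMeasure (volume.restrict (Set.Ioc (0:ℝ) x)) := by
    constructor
    rw [Measure.restrict_apply_univ, Real.volume_Ioc]
    exact ENNReal.ofReal_lt_top
  have hpq : Real.HolderConjugate 2 2 := by constructor <;> norm_num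
  have h2' : MemLp (fun t => ‖f t‖) (ENNReal.ofReal 2) (volume.restrict (Set.Ioc (0:ℝ) x)) := by
    have he : (ENNReal.ofReal 2) = (2 : ℝ≥0∞) := by norm_num
    rw [he]
    exact h2.norm
  have hc : MemLp (fun _ : ℝ => (1:ℝ)) (ENNReal.ofReal 2)
      (volume.restrict (Set.Ioc (0:ℝ) x)) := memLp_const 1
  have key := integral_mul_le_Lp_mul_Lq_of_nonneg (μ := volume.restrict (Set.Ioc (0:ℝ) x)) hpq
    (Filter.Eventually.of_forall fun t => norm_nonneg (f t))
    (Filter.Eventually.of_forall fun _t => (zero_le_one : (0:ℝ) ≤ 1)) h2' hc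
  simp only [mul_one, Real.one_rpow] at key
  have hre : ∀ a : ℝ, ‖f a‖ ^ (2:ℝ) = ‖f a‖ ^ (2:ℕ) := fun a => by
    rw [← Real.rpow_natCast ‖f a‖ 2]; norm_num
  simp_rw [hre, ← Real.sqrt_eq_rpow] at key
  refine le_trans key (le_of_eq ?_)
  rw [setIntegral_const, smul_eq_mul, mul_one, Real.volume_real_Ioc_of_le hx0, sub_zero]

/-- The Volterra operator algebra `A_V` does not admit a gauge action. -/
theorem volterra_no_gaugeAction (V : L2 →L[ℂ] L2)
    (hV : ∀ ρ : L2, ∀ᵐ x ∂μ01, (V ρ) x = ∫ t in (0:ℝ)..x, ρ t) :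
    ¬ Nonempty (GaugeAction V) := by
  rintro ⟨G⟩
  -- integrability of L2 elements on [0,1]
  have hInt : ∀ ξ : L2, IntegrableOn (ξ : ℝ → ℂ) (Set.Icc (0:ℝ) 1) volume := by
    intro ξ
    exact MemLp.integrable (by norm_num) (Lp.memLp ξ)
  -- representatives of V 1 and V² 1
  have hVone : (V oneL2 : ℝ → ℂ) =ᵐ[μ01] fun x => (x : ℂ) := by
    filter_upwards [hV oneL2, mem01] with x h1 hmem
    rw [h1, intervalIntegral_congr01 oneL2_coe hmem]
    simp
  have hVVone : (V (V oneL2) : ℝ → ℂ) =ᵐ[μ01] fun x => ((x ^ 2 / 2 : ℝ) : ℂ) := by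
    filter_upwards [hV (V oneL2), mem01] with x h1 hmem
    rw [h1, intervalIntegral_congr01 hVone hmem,
      show (fun t : ℝ => (t : ℂ)) = fun t : ℝ => ((id t : ℝ) : ℂ) from rfl,
      intervalIntegral.integral_ofReal]
    norm_num [integral_id]
  -- lower bound: ‖(V + V·V) 1‖² = 19/30
  have hlow : ‖(V + V * V) oneL2‖ ^ 2 = 19 / 30 := by
    have h0 : (V + V * V) oneL2 = V oneL2 + V (V oneL2) := rfl
    have hrep : ((V + V * V) oneL2 : ℝ → ℂ) =ᵐ[μ01] fun x => ((x + x ^ 2 / 2 : ℝ) : ℂ) := by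
      rw [h0]
      filter_upwards [Lp.coeFn_add (V oneL2) (V (V oneL2)), hVone, hVVone] with x ha h1 h2
      rw [ha, Pi.add_apply, h1, h2]
      push_cast
      ring
    rw [norm_sq_L2]
    have hcongr : ∫ x, ‖((V + V * V) oneL2 : ℝ → ℂ) x‖ ^ 2 ∂μ01
        = ∫ x, (x + x ^ 2 / 2) ^ 2 ∂μ01 := by
      refine integral_congr_ae ?_
      filter_upwards [hrep] with x hx
      rw [hx, Complex.norm_real, Real.norm_eq_abs, sq_abs]
    rw [hcongr, integral01_poly]
  -- upper bound: ‖(V - V·V) ξ‖ ≤ √(1/2) ‖ξ‖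
  have hup : ∀ ξ : L2, ‖(V - V * V) ξ‖ ≤ Real.sqrt (1/2) * ‖ξ‖ := by
    intro ξ
    have hbd : ∀ᵐ x ∂μ01, ‖((V - V * V) ξ : ℝ → ℂ) x‖ ^ 2 ≤ x * ‖ξ‖ ^ 2 := by
      have h0 : (V - V * V) ξ = V ξ - V (V ξ) := rfl
      rw [h0]
      filter_upwards [Lp.coeFn_sub (V ξ) (V (V ξ)), hV ξ, hV (V ξ), mem01] with x ha h1 h2 hmem
      obtain ⟨hx0, hx1⟩ := hmem
      have hsub : Set.Ioc (0:ℝ) x ⊆ Set.Icc (0:ℝ) 1 := fun t ht => ⟨ht.1.le, ht.2.trans hx1⟩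
      have hξIoc : IntegrableOn (ξ : ℝ → ℂ) (Set.Ioc 0 x) volume := (hInt ξ).mono_set hsub
      have hξiv : IntervalIntegrable (ξ : ℝ → ℂ) volume 0 x := by
        rw [intervalIntegrable_iff, Set.uIoc_of_le hx0]; exact hξIoc
      have hkiv : IntervalIntegrable (fun t => ((x - t : ℝ) : ℂ) * (ξ : ℝ → ℂ) t) volume 0 x := by
        rw [intervalIntegrable_iff, Set.uIoc_of_le hx0]
        apply Integrable.bdd_mul (c := 1) hξIoc
          ((Complex.continuous_ofReal.comp (continuous_sub_left x)).aestronglyMeasurable)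
        filter_upwards [ae_restrict_mem measurableSet_Ioc] with t ht
        rw [Function.comp_apply, Complex.norm_real, Real.norm_eq_abs, abs_le]
        constructor
        · linarith [ht.2]
        · linarith [ht.1]
      have h2' : (V (V ξ) : ℝ → ℂ) x = ∫ t in (0:ℝ)..x, ((x - t : ℝ) : ℂ) * (ξ : ℝ → ℂ) t := by
        rw [h2, intervalIntegral_congr01 (hV ξ) ⟨hx0, hx1⟩]
        exact fubini_triangle _ (hInt ξ) ⟨hx0, hx1⟩
      have hval : ((V ξ - V (V ξ) : L2) : ℝ → ℂ) x
          = ∫ t in (0:ℝ)..x, ((1 - (x - t) : ℝ) : ℂ) * (ξ : ℝ → ℂ) t := by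
        rw [ha, Pi.sub_apply, h1, h2', ← intervalIntegral.integral_sub hξiv hkiv]
        refine intervalIntegral.integral_congr fun t _ => ?_
        push_cast
        ring
      have hb1 : ‖((V ξ - V (V ξ) : L2) : ℝ → ℂ) x‖ ≤ ∫ t in (0:ℝ)..x, ‖(ξ : ℝ → ℂ) t‖ := by
        rw [hval]
        refine le_trans (intervalIntegral.norm_integral_le_integral_norm hx0) ?_
        have hkiv' : IntervalIntegrable (fun t => ((1 - (x - t) : ℝ) : ℂ) * (ξ : ℝ → ℂ) t)
            volume 0 x := by
          refine (hξiv.sub hkiv).congr ?_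
          intro t _
          push_cast
          ring
        apply intervalIntegral.integral_mono_on hx0 hkiv'.norm hξiv.norm
        intro t ht
        rw [norm_mul, Complex.norm_real, Real.norm_eq_abs]
        have habs : |1 - (x - t)| ≤ 1 := by
          rw [abs_le]
          constructor
          · linarith [ht.1, ht.2]
          · linarith [ht.1, ht.2]
        calc |1 - (x - t)| * ‖(ξ : ℝ → ℂ) t‖ ≤ 1 * ‖(ξ : ℝ → ℂ) t‖ :=
              mul_le_mul_of_nonneg_right habs (norm_nonneg _)
          _ = ‖(ξ : ℝ → ℂ) t‖ := one_mul _
      have hmem2 : MemLp (ξ : ℝ → ℂ) 2 (volume.restrict (Set.Ioc (0:ℝ) x)) := by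
        have h : MemLp (ξ : ℝ → ℂ) 2
            ((volume.restrict (Set.Icc (0:ℝ) 1)).restrict (Set.Ioc (0:ℝ) x)) :=
          (Lp.memLp ξ).restrict (Set.Ioc (0:ℝ) x)
        rwa [Measure.restrict_restrict measurableSet_Ioc,
          Set.inter_eq_self_of_subset_left hsub] at h
      have hb2 : ∫ t in (0:ℝ)..x, ‖(ξ : ℝ → ℂ) t‖ ≤ Real.sqrt (‖ξ‖ ^ 2) * Real.sqrt x := by
        rw [intervalIntegral.integral_of_le hx0]
        refine le_trans (cs_bound _ hx0 hmem2) ?_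
        refine mul_le_mul_of_nonneg_right (Real.sqrt_le_sqrt ?_) (Real.sqrt_nonneg x)
        rw [norm_sq_L2, integral01_eq_Ioc]
        apply setIntegral_mono_set
        · have h : IntegrableOn (fun t => ‖(ξ : ℝ → ℂ) t‖ ^ 2) (Set.Icc (0:ℝ) 1) volume :=
            integrable_norm_sq ξ
          exact h.mono_set Set.Ioc_subset_Icc_self
        · exact Filter.Eventually.of_forall fun t => sq_nonneg _
        · exact HasSubset.Subset.eventuallyLE
            (fun t ht => ⟨ht.1, ht.2.trans hx1⟩)
      calc ‖((V ξ - V (V ξ) : L2) : ℝ → ℂ) x‖ ^ 2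
          ≤ (Real.sqrt (‖ξ‖ ^ 2) * Real.sqrt x) ^ 2 :=
            pow_le_pow_left₀ (norm_nonneg _) (le_trans hb1 hb2) 2
        _ = x * ‖ξ‖ ^ 2 := by
            rw [mul_pow, Real.sq_sqrt (sq_nonneg _), Real.sq_sqrt hx0]
            ring
    have hnorm2 : ‖(V - V * V) ξ‖ ^ 2 ≤ (1/2) * ‖ξ‖ ^ 2 := by
      rw [norm_sq_L2]
      refine le_trans (integral_mono_ae (integrable_norm_sq ((V - V * V) ξ))
        (integrable01_id.mul_const _) hbd) ?_
      rw [integral_mul_const, integral01_id]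
    have hrw : ‖(V - V * V) ξ‖ = Real.sqrt (‖(V - V * V) ξ‖ ^ 2) :=
      (Real.sqrt_sq (norm_nonneg _)).symm
    rw [hrw]
    calc Real.sqrt (‖(V - V * V) ξ‖ ^ 2) ≤ Real.sqrt ((1/2) * ‖ξ‖ ^ 2) :=
          Real.sqrt_le_sqrt hnorm2
      _ = Real.sqrt (1/2) * ‖ξ‖ := by
          rw [Real.sqrt_mul (by norm_num), Real.sqrt_sq (norm_nonneg _)]
  -- the gauge action forces ‖V + V·V‖ = ‖V - V·V‖
  have hn1 : ‖(-1 : ℂ)‖ = 1 := by norm_num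
  have hVmem : V ∈ polyAlgV V :=
    subset_closure (NonUnitalAlgebra.self_mem_adjoin_singleton ℂ V)
  have hV2mem : V * V ∈ polyAlgV V :=
    subset_closure (mul_mem (NonUnitalAlgebra.self_mem_adjoin_singleton ℂ V)
      (NonUnitalAlgebra.self_mem_adjoin_singleton ℂ V))
  have hSmem : V + V * V ∈ polyAlgV V :=
    subset_closure (add_mem (NonUnitalAlgebra.self_mem_adjoin_singleton ℂ V)
      (mul_mem (NonUnitalAlgebra.self_mem_adjoin_singleton ℂ V)
        (NonUnitalAlgebra.self_mem_adjoin_singleton ℂ V)))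
  have hγ : G.γ (-1) (V + V * V) = -(V - V * V) := by
    rw [G.map_add (-1) hn1 V hVmem (V * V) hV2mem,
      G.map_mul (-1) hn1 V hVmem V hVmem, G.map_gen (-1) hn1]
    rw [neg_one_smul, neg_mul_neg]
    abel
  have heqnorm : ‖V + V * V‖ = ‖V - V * V‖ := by
    have h := G.isometric (-1) hn1 (V + V * V) hSmem
    rw [hγ, norm_neg] at h
    exact h.symm
  have h1 : ‖(V + V * V) oneL2‖ ≤ ‖V + V * V‖ := by
    have h := (V + V * V).le_opNorm oneL2
    rwa [norm_oneL2, mul_one] at h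
  have h2 : ‖V - V * V‖ ≤ Real.sqrt (1/2) :=
    (V - V * V).opNorm_le_bound (Real.sqrt_nonneg _) hup
  have h3 : (19:ℝ)/30 ≤ 1/2 := by
    calc (19:ℝ)/30 = ‖(V + V * V) oneL2‖ ^ 2 := hlow.symm
      _ ≤ ‖V + V * V‖ ^ 2 := pow_le_pow_left₀ (norm_nonneg _) h1 2
      _ = ‖V - V * V‖ ^ 2 := by rw [heqnorm]
      _ ≤ Real.sqrt (1/2) ^ 2 := pow_le_pow_left₀ (norm_nonneg _) h2 2
      _ = 1/2 := Real.sq_sqrt (by norm_num)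
  norm_num at h3
end
end
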